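/- Let n ≥ 1 and let A be an invertible real n×n matrix. Then AᵀA is positive definite, the matrix B* = A · ((AᵀA)^{1/2})⁻¹ (where (AᵀA)^{1/2} is the positive semidefinite square root of AᵀA) is orthogonal, and B* minimizes the Frobenius distance to A over all orthogonal matrices: for every B ∈ O(n), ‖B* − A‖_F ≤ ‖B − A‖_F. -/

import Mathlib

open Matrix

/-- The square root of a positive semidefinite matrix, as defined in the older Mathlib
(removed since). -/
noncomputable def Matrix.PosSemidef.sqrt {n : Type*} [Fintype n] [DecidableEq n]
    {A : Matrix n n ℝ} (hA : A.PosSemidef) : Matrix n n ℝ :=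
  (hA.1.eigenvectorUnitary : Matrix n n ℝ) * diagonal ((↑) ∘ (√·) ∘ hA.1.eigenvalues) *
    (star hA.1.eigenvectorUnitary : Matrix n n ℝ)

/-- The Frobenius norm of a real square matrix: `‖A‖_F = (trace (Aᵀ * A))^(1/2)`. -/
noncomputable def frobNorm {n : ℕ} (A : Matrix (Fin n) (Fin n) ℝ) : ℝ :=
  Real.sqrt (Matrix.trace (Aᵀ * A))

lemma Matrix.PosSemidef.posSemidef_sqrt {n : Type*} [Fintype n] [DecidableEq n]
    {A : Matrix n n ℝ} (hA : A.PosSemidef) : hA.sqrt.PosSemidef := by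
  unfold Matrix.PosSemidef.sqrt
  have h := (posSemidef_diagonal_iff (d := ((↑) ∘ (√·) ∘ hA.1.eigenvalues : n → ℝ))).mpr
    (fun i => by simp [Real.sqrt_nonneg])
  have := h.mul_mul_conjTranspose_same (hA.1.eigenvectorUnitary : Matrix n n ℝ)
  simpa [star_eq_conjTranspose] using this

lemma Matrix.PosSemidef.sqrt_mul_self {n : Type*} [Fintype n] [DecidableEq n]
    {A : Matrix n n ℝ} (hA : A.PosSemidef) : hA.sqrt * hA.sqrt = A := by
  unfold Matrix.PosSemidef.sqrt
  set C : Matrix n n ℝ := (hA.1.eigenvectorUnitary : Matrix n n ℝ) with hCdef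
  have hC : star C * C = 1 := Unitary.coe_star_mul_self _
  have e : C * diagonal ((↑) ∘ (√·) ∘ hA.1.eigenvalues) * star C *
      (C * diagonal ((↑) ∘ (√·) ∘ hA.1.eigenvalues) * star C) =
      C * (diagonal ((↑) ∘ (√·) ∘ hA.1.eigenvalues) * (star C * C) *
        diagonal ((↑) ∘ (√·) ∘ hA.1.eigenvalues)) * star C := by
    simp only [mul_assoc]
  rw [e, hC, mul_one, diagonal_mul_diagonal]
  conv_rhs => rw [hA.1.spectral_theorem, Unitary.conjStarAlgAut_apply]
  congr 2
  congr 1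
  funext i
  simp [Real.mul_self_sqrt (hA.eigenvalues_nonneg i)]

lemma dot_tmul {n : ℕ} (A : Matrix (Fin n) (Fin n) ℝ) (x : Fin n → ℝ) :
    x ⬝ᵥ ((Aᵀ * A) *ᵥ x) = (A *ᵥ x) ⬝ᵥ (A *ᵥ x) := by
  rw [← mulVec_mulVec, dotProduct_mulVec, vecMul_transpose]

lemma trace_orth_mul_le {n : ℕ} {Q S : Matrix (Fin n) (Fin n) ℝ}
    (hQ : Qᵀ * Q = 1) (hS : S.PosSemidef) : (Q * S).trace ≤ S.trace := by
  set T := hS.sqrt with hTdef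
  have hT : T * T = S := hS.sqrt_mul_self
  have hTsym : Tᵀ = T := by
    have := hS.posSemidef_sqrt.isHermitian
    rwa [Matrix.IsHermitian, conjTranspose_eq_transpose_of_trivial] at this
  have key : ∀ u : Fin n → ℝ, u ⬝ᵥ (Q *ᵥ u) ≤ u ⬝ᵥ u := by
    intro u
    have h2 : (Q *ᵥ u) ⬝ᵥ (Q *ᵥ u) = u ⬝ᵥ u := by
      have : u ⬝ᵥ ((Qᵀ * Q) *ᵥ u) = (Q *ᵥ u) ⬝ᵥ (Q *ᵥ u) := dot_tmul Q u
      rw [hQ, one_mulVec] at this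
      exact this.symm
    have hcs := Finset.sum_mul_sq_le_sq_mul_sq Finset.univ u (Q *ᵥ u)
    have hdot : u ⬝ᵥ (Q *ᵥ u) = ∑ i, u i * (Q *ᵥ u) i := rfl
    have huu : u ⬝ᵥ u = ∑ i, u i ^ 2 := by
      simp [dotProduct, sq]
    have hww : (Q *ᵥ u) ⬝ᵥ (Q *ᵥ u) = ∑ i, (Q *ᵥ u) i ^ 2 := by
      simp [dotProduct, sq]
    have hnn : (0:ℝ) ≤ u ⬝ᵥ u := by
      rw [huu]; positivity
    nlinarith [hcs, hdot, huu, hww, h2, hnn]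
  have hsym : ∀ i j, T i j = T j i := fun i j => by
    conv_lhs => rw [← hTsym, transpose_apply]
  calc (Q * S).trace = (T * (Q * T)).trace := by
        rw [← hT, ← mul_assoc, trace_mul_comm]
    _ = ∑ i, (fun j => T j i) ⬝ᵥ (Q *ᵥ (fun j => T j i)) := by
        simp only [trace, diag, mul_apply, dotProduct, mulVec]
        refine Finset.sum_congr rfl fun i _ => Finset.sum_congr rfl fun j _ => ?_
        rw [hsym i j]
    _ ≤ ∑ i, (fun j => T j i) ⬝ᵥ (fun j => T j i) := by
        apply Finset.sum_le_sum; intro i _; exact key _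
    _ = S.trace := by
        rw [← hT]
        simp only [trace, diag, mul_apply, dotProduct]
        refine Finset.sum_congr rfl fun i _ => Finset.sum_congr rfl fun j _ => ?_
        rw [hsym i j]

/-- For invertible real `A`, `AᵀA` is positive definite,
`B* = A ((AᵀA)^{1/2})⁻¹` is orthogonal, and `B*` minimizes the Frobenius distance
to `A` among orthogonal matrices. -/
theorem orthogonal_projection_closest (n : ℕ) (hn : 1 ≤ n)
    (A : Matrix (Fin n) (Fin n) ℝ) (hA : IsUnit A.det) :
    (Aᵀ * A).PosDef ∧
    (A * ((Matrix.posSemidef_conjTranspose_mul_self A).sqrt)⁻¹)ᵀ *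
      (A * ((Matrix.posSemidef_conjTranspose_mul_self A).sqrt)⁻¹) = 1 ∧
    ∀ B : Matrix (Fin n) (Fin n) ℝ, Bᵀ * B = 1 →
      frobNorm (A * ((Matrix.posSemidef_conjTranspose_mul_self A).sqrt)⁻¹ - A) ≤
        frobNorm (B - A) := by
  have hPSD := Matrix.posSemidef_conjTranspose_mul_self A
  set S := hPSD.sqrt with hSdef
  have hSS : S * S = Aᵀ * A := by
    rw [hSdef, hPSD.sqrt_mul_self, conjTranspose_eq_transpose_of_trivial]
  have hSpsd : S.PosSemidef := hPSD.posSemidef_sqrt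
  have hSt : Sᵀ = S := by
    have := hSpsd.isHermitian
    rwa [Matrix.IsHermitian, conjTranspose_eq_transpose_of_trivial] at this
  -- S is invertible
  have hSd : IsUnit S.det := by
    have h1 : S.det * S.det = Aᵀ.det * A.det := by
      rw [← det_mul, hSS, det_mul]
    have hu : IsUnit (S.det * S.det) := by
      rw [h1, det_transpose]; exact hA.mul hA
    exact isUnit_of_mul_isUnit_left hu
  have hSinv : S⁻¹ * S = 1 := nonsing_inv_mul S hSd
  have hSinv' : S * S⁻¹ = 1 := mul_nonsing_inv S hSd
  have hSit : S⁻¹ᵀ = S⁻¹ := by rw [transpose_nonsing_inv, hSt]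
  set Bs := A * S⁻¹ with hBsdef
  -- positive definiteness
  have hPD : (Aᵀ * A).PosDef := by
    refine posDef_iff_dotProduct_mulVec.mpr ⟨?_, ?_⟩
    · have := isHermitian_conjTranspose_mul_self A
      rwa [conjTranspose_eq_transpose_of_trivial] at this
    · intro x hx
      have hst : star x = x := by simp
      rw [hst, dot_tmul]
      have hAx : A *ᵥ x ≠ 0 := by
        intro h
        apply hx
        have hinj : Function.Injective A.mulVec := mulVec_injective_iff_isUnit.mpr ((Matrix.isUnit_iff_isUnit_det A).mpr hA)
        have : A *ᵥ x = A *ᵥ 0 := by rw [h, mulVec_zero]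
        exact hinj this
      obtain ⟨i, hi⟩ := Function.ne_iff.mp hAx
      have : (0:ℝ) < ∑ j, (A *ᵥ x) j * (A *ᵥ x) j := by
        apply Finset.sum_pos' (fun j _ => mul_self_nonneg _)
        exact ⟨i, Finset.mem_univ i, mul_self_pos.mpr (by simpa using hi)⟩
      simpa [dotProduct] using this
  -- orthogonality of Bs
  have hBsorth : Bsᵀ * Bs = 1 := by
    rw [hBsdef, transpose_mul, hSit, mul_assoc, ← mul_assoc Aᵀ A S⁻¹, ← hSS,
      mul_assoc S S S⁻¹, hSinv', mul_one, hSinv]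
  have hBsS : Bs * S = A := by
    rw [hBsdef, mul_assoc, hSinv, mul_one]
  refine ⟨hPD, hBsorth, ?_⟩
  intro B hB
  -- trace expansion
  have expand : ∀ C : Matrix (Fin n) (Fin n) ℝ, Cᵀ * C = 1 →
      ((C - A)ᵀ * (C - A)).trace = (n : ℝ) + (Aᵀ * A).trace - 2 * (Cᵀ * A).trace := by
    intro C hC
    have htr : (Aᵀ * C).trace = (Cᵀ * A).trace := by
      rw [← trace_transpose (Aᵀ * C), transpose_mul, transpose_transpose]
    rw [transpose_sub, sub_mul, mul_sub, mul_sub, trace_sub, trace_sub, trace_sub,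
      hC, htr, trace_one]
    simp [Fintype.card_fin]
    ring
  -- key inequality
  have hBBt : B * Bᵀ = 1 := mul_eq_one_comm.mp hB
  have hkey : (Bᵀ * A).trace ≤ (Bsᵀ * A).trace := by
    have h1 : (Bsᵀ * A).trace = S.trace := by
      rw [← hBsS, ← mul_assoc, hBsorth, one_mul]
    have h2 : (Bᵀ * A).trace = ((Bᵀ * Bs) * S).trace := by
      rw [mul_assoc, hBsS]
    have hQ : (Bᵀ * Bs)ᵀ * (Bᵀ * Bs) = 1 := by
      rw [transpose_mul, transpose_transpose, mul_assoc, ← mul_assoc B Bᵀ Bs,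
        hBBt, one_mul, hBsorth]
    rw [h1, h2]
    exact trace_orth_mul_le hQ hSpsd
  -- conclude
  rw [frobNorm, frobNorm, expand Bs hBsorth, expand B hB]
  apply Real.sqrt_le_sqrt
  linarith
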